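/- Let F(x,y,z) = (κ₁xz - κ₂xy, κ₂xy - κ₃y, -κ₁xz + κ₃y) with κ₁, κ₂, κ₃ > 0. Then the divergence of the rescaled vector field F(x,y,z)/(xyz) equals -κ₃/(x z²), which is strictly negative on the open positive octant ℝ³₊. -/

import Mathlib

theorem lifted_lotka_dulac_divergence
    (κ₁ κ₂ κ₃ : ℝ) (h₁ : 0 < κ₁) (h₂ : 0 < κ₂) (h₃ : 0 < κ₃)
    (x y z : ℝ) (hx : 0 < x) (hy : 0 < y) (hz : 0 < z) :
    deriv (fun s => (κ₁*s*z - κ₂*s*y)/(s*y*z)) x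
      + deriv (fun s => (κ₂*x*s - κ₃*s)/(x*s*z)) y
      + deriv (fun s => (-κ₁*x*s + κ₃*y)/(x*y*s)) z
      = -κ₃/(x*z^2) ∧ -κ₃/(x*z^2) < 0 := by
  have hxne := hx.ne'
  have hyne := hy.ne'
  have hzne := hz.ne'
  have e1 : deriv (fun s => (κ₁*s*z - κ₂*s*y)/(s*y*z)) x
      = deriv (fun _ : ℝ => (κ₁*z - κ₂*y)/(y*z)) x := by
    apply Filter.EventuallyEq.deriv_eq
    filter_upwards [eventually_ne_nhds hxne] with s hs
    field_simp
  have e2 : deriv (fun s => (κ₂*x*s - κ₃*s)/(x*s*z)) y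
      = deriv (fun _ : ℝ => (κ₂*x - κ₃)/(x*z)) y := by
    apply Filter.EventuallyEq.deriv_eq
    filter_upwards [eventually_ne_nhds hyne] with s hs
    field_simp
  have e3 : deriv (fun s => (-κ₁*x*s + κ₃*y)/(x*y*s)) z
      = deriv (fun s : ℝ => -κ₁/y + (κ₃/x) * s⁻¹) z := by
    apply Filter.EventuallyEq.deriv_eq
    filter_upwards [eventually_ne_nhds hzne] with s hs
    field_simp
  have d3 : deriv (fun s : ℝ => -κ₁/y + (κ₃/x) * s⁻¹) z = (κ₃/x) * (-(z^2)⁻¹) := by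
    have h : HasDerivAt (fun s : ℝ => -κ₁/y + (κ₃/x) * s⁻¹) ((κ₃/x) * (-(z^2)⁻¹)) z := by
      simpa using (hasDerivAt_inv hzne).const_mul (κ₃/x) |>.const_add (-κ₁/y)
    exact h.deriv
  constructor
  · rw [e1, e2, e3, deriv_const, deriv_const, d3]
    field_simp
    ring
  · have : 0 < κ₃/(x*z^2) := div_pos h₃ (by positivity)
    rw [neg_div]; linarith
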